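/- Let k₁,…,k_d ∈ ℕ, s_j ∈ {1,…,k_j}, n ∈ ℕ with n ≤ k₁⋯k_d. Then the Kolmogorov n-width of V_{s₁,…,s_d}^{k₁,…,k_d} in the Euclidean space ℝ^{k₁⋯k_d} (ℓ₂ norm) satisfies d_n(V, ℓ₂^{k₁⋯k_d}) ≥ (s₁⋯s_d)^{1/2} · √(1 − n/(k₁⋯k_d)). -/

import Mathlib

open scoped ENNReal NNReal BigOperators

/-- The `ℓ_p` norm on `Fin n → ℝ`, with `p = ∞` giving the max norm. -/
noncomputable def lpN (p : ℝ≥0∞) {n : ℕ} (x : Fin n → ℝ) : ℝ :=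
  if p = ∞ then ((Finset.univ.sup fun i => ‖x i‖₊ : ℝ≥0) : ℝ)
  else (∑ i, |x i| ^ p.toReal) ^ (1 / p.toReal)

/-- The mixed norm `l_{p₁,…,p_d}^{k₁,…,k_d}`, defined recursively: the `ℓ_{p_d}` norm
(over the last index) of the mixed norms of the slices. -/
noncomputable def mixedNorm : {d : ℕ} → (k : Fin d → ℕ) → (p : Fin d → ℝ≥0∞) →
    ((∀ i, Fin (k i)) → ℝ) → ℝ
  | 0, _, _, x => |x (fun i => i.elim0)|
  | (_+1), k, p, x => lpN (p (Fin.last _)) fun j =>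
      mixedNorm (fun i => k i.castSucc) (fun i => p i.castSucc)
        (fun v => x (Fin.snoc v j))

/-- The Kolmogorov `n`-width `d_n(M, X)` of `M` in the space with norm `nrm`:
the infimum over subspaces `L` of dimension at most `n` of
`sup_{x ∈ M} inf_{y ∈ L} ‖x - y‖`. -/
noncomputable def kolWidth {V : Type*} [AddCommGroup V] [Module ℝ V] (n : ℕ)
    (M : Set V) (nrm : V → ℝ) : ℝ≥0∞ :=
  ⨅ L : {L : Submodule ℝ V // Module.finrank ℝ (↥L) ≤ n},
    ⨆ x ∈ M, ⨅ y ∈ (L.1 : Set V), ENNReal.ofReal (nrm (x - y))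

/-- The indicator vector `x̂(s̄)` of the box `∏_j {1,…,s_j}`. -/
noncomputable def boxIndicator {d : ℕ} (k s : Fin d → ℕ) : (∀ i, Fin (k i)) → ℝ :=
  fun v => if ∀ i, (v i : ℕ) < s i then 1 else 0

/-- All signed coordinate-permuted copies `g(f)` of `f`. -/
def signedCopies {d : ℕ} (k : Fin d → ℕ) (f : (∀ i, Fin (k i)) → ℝ) :
    Set ((∀ i, Fin (k i)) → ℝ) :=
  {y | ∃ (σ : ∀ i, Equiv.Perm (Fin (k i))) (ε : ∀ i, Fin (k i) → ℝ),
    (∀ i j, ε i j = 1 ∨ ε i j = -1) ∧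
    y = fun v => (∏ i, ε i (v i)) * f (fun i => (σ i) (v i))}

/-! ### Auxiliary lemmas -/

noncomputable def sgn (b : Bool) : ℝ := if b then 1 else -1

lemma sgn_mul_self (b : Bool) : sgn b * sgn b = 1 := by cases b <;> simp [sgn]

lemma sgn_pm (b : Bool) : sgn b = 1 ∨ sgn b = -1 := by cases b <;> simp [sgn]

lemma card_filter_lt (m t : ℕ) (h : t ≤ m) :
    (Finset.univ.filter fun x : Fin m => (x : ℕ) < t).card = t := by
  have he : (Finset.univ.filter fun x : Fin m => (x : ℕ) < t) =
      Finset.map (Fin.castLEEmb h) Finset.univ := by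
    ext x
    simp only [Finset.mem_filter, Finset.mem_univ, true_and]
    constructor
    · intro hx
      simp only [Finset.mem_map, Finset.mem_univ, true_and]
      exact ⟨⟨(x:ℕ), hx⟩, by simp [Fin.castLEEmb, Fin.ext_iff]⟩
    · intro hx
      simp only [Finset.mem_map, Finset.mem_univ, true_and] at hx
      obtain ⟨y, rfl⟩ := hx
      simpa [Fin.castLEEmb] using y.2
  rw [he, Finset.card_map, Finset.card_univ, Fintype.card_fin]

lemma sum_sgn_mul {m : ℕ} (a b : Fin m) :
    ∑ e : Fin m → Bool, sgn (e a) * sgn (e b) = if a = b then ((2:ℝ)^m) else 0 := by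
  rcases eq_or_ne a b with rfl | hab
  · simp only [if_pos rfl]
    rw [Finset.sum_congr rfl (fun e _ => sgn_mul_self (e a))]
    simp [Finset.card_univ, Fintype.card_fun]
  · rw [if_neg hab]
    apply Finset.sum_ninvolution (fun e => Function.update e a (!(e a)))
    · intro e
      have h1 : Function.update e a (!(e a)) a = !(e a) := Function.update_self _ _ _
      have h2 : Function.update e a (!(e a)) b = e b := Function.update_of_ne (Ne.symm hab) _ _
      rw [h1, h2]
      cases e a <;> cases e b <;> simp [sgn]
    · intro e he hcontra
      have := congrFun hcontra a
      rw [Function.update_self] at this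
      cases hh : e a <;> rw [hh] at this <;> simp at this
    · intro e; exact Finset.mem_univ _
    · intro e
      ext x
      rcases eq_or_ne x a with rfl | hx
      · simp
      · simp [Function.update_of_ne hx]

lemma sum_sgn_pi {d : ℕ} (k : Fin d → ℕ) (v w : ∀ i, Fin (k i)) :
    ∑ ε : ∀ i, Fin (k i) → Bool, (∏ i, sgn (ε i (v i))) * (∏ i, sgn (ε i (w i)))
      = if v = w then (∏ i, (2:ℝ)^(k i)) else 0 := by
  have h1 : ∀ ε : ∀ i, Fin (k i) → Bool,
      (∏ i, sgn (ε i (v i))) * (∏ i, sgn (ε i (w i)))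
        = ∏ i, (sgn (ε i (v i)) * sgn (ε i (w i))) := fun ε =>
    (Finset.prod_mul_distrib).symm
  rw [Finset.sum_congr rfl fun ε _ => h1 ε,
    ← Fintype.prod_sum (f := fun i (e : Fin (k i) → Bool) => sgn (e (v i)) * sgn (e (w i)))]
  rcases eq_or_ne v w with rfl | hvw
  · rw [if_pos rfl]
    exact Finset.prod_congr rfl fun i _ => by rw [sum_sgn_mul, if_pos rfl]
  · rw [if_neg hvw]
    obtain ⟨i0, hi0⟩ : ∃ i, v i ≠ w i := by
      by_contra hc; push_neg at hc; exact hvw (funext hc)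
    apply Finset.prod_eq_zero (Finset.mem_univ i0)
    rw [sum_sgn_mul, if_neg hi0]

lemma boxIndicator_mul_self {d : ℕ} (k s : Fin d → ℕ) (v : ∀ i, Fin (k i)) :
    boxIndicator k s v * boxIndicator k s v = boxIndicator k s v := by
  unfold boxIndicator; split <;> simp

lemma sum_indicator_shift {m t : ℕ} [NeZero m] (h : t ≤ m) (a : Fin m) :
    ∑ j : Fin m, (if ((a + j : Fin m) : ℕ) < t then (1:ℝ) else 0) = t := by
  rw [Fintype.sum_equiv (Equiv.addLeft a)
    (fun j => if ((a + j : Fin m) : ℕ) < t then (1:ℝ) else 0)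
    (fun x => if (x : ℕ) < t then (1:ℝ) else 0) (fun j => rfl)]
  rw [Finset.sum_boole]
  rw [card_filter_lt m t h]

lemma sum_box {d : ℕ} (k s : Fin d → ℕ) [∀ i, NeZero (k i)] (hk : ∀ i, s i ≤ k i)
    (a : ∀ i, Fin (k i)) :
    ∑ c : ∀ i, Fin (k i), boxIndicator k s (fun i => a i + c i) = ∏ i, (s i : ℝ) := by
  have h1 : ∀ c : ∀ i, Fin (k i), boxIndicator k s (fun i => a i + c i)
      = ∏ i, (if ((a i + c i : Fin (k i)) : ℕ) < s i then (1:ℝ) else 0) := by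
    intro c
    rw [boxIndicator, Finset.prod_boole]
    simp
  rw [Finset.sum_congr rfl (fun c _ => h1 c),
    ← Fintype.prod_sum (f := fun i (ci : Fin (k i)) =>
      if ((a i + ci : Fin (k i)) : ℕ) < s i then (1:ℝ) else 0)]
  exact Finset.prod_congr rfl fun i _ => sum_indicator_shift (hk i) (a i)

set_option maxHeartbeats 1000000 in
/-- Main witness lemma: for every subspace of dimension at most `n`, there is a signed copy
of the box indicator at squared distance at least `S (1 - n/K)` from the subspace. -/
lemma exists_witness {d : ℕ} (k s : Fin d → ℕ) (hs1 : ∀ j, 1 ≤ s j) (hsk : ∀ j, s j ≤ k j)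
    (n : ℕ) (hn : n ≤ ∏ j, k j)
    (L : Submodule ℝ ((∀ i, Fin (k i)) → ℝ)) (hL : Module.finrank ℝ ↥L ≤ n) :
    ∃ x₀ ∈ signedCopies k (boxIndicator k s), ∀ y ∈ L,
      (∏ j, (s j : ℝ)) * (1 - (n:ℝ)/∏ j, (k j : ℝ)) ≤ ∑ v, (x₀ v - y v)^2 := by
  classical
  haveI : ∀ i, NeZero (k i) := fun i => ⟨by have h1 := hs1 i; have h2 := hsk i; omega⟩
  set S : ℝ := ∏ j, (s j : ℝ) with hS
  set K : ℝ := ∏ j, (k j : ℝ) with hK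
  have hSpos : 0 < S := Finset.prod_pos fun j _ => by exact_mod_cast hs1 j
  have hKpos : 0 < K := Finset.prod_pos fun j _ => by
    have h1 := hs1 j; have h2 := hsk j
    exact_mod_cast (by omega : 0 < k j)
  -- Euclidean space setup
  set eL : ((∀ i, Fin (k i)) → ℝ) ≃ₗ[ℝ] EuclideanSpace ℝ (∀ i, Fin (k i)) :=
    (WithLp.linearEquiv 2 ℝ _).symm with heL
  set L' : Submodule ℝ (EuclideanSpace ℝ (∀ i, Fin (k i))) :=
    L.map (eL : ((∀ i, Fin (k i)) → ℝ) →ₗ[ℝ] EuclideanSpace ℝ (∀ i, Fin (k i))) with hL'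
  have hrank : Module.finrank ℝ ↥L' = Module.finrank ℝ ↥L :=
    LinearEquiv.finrank_map_eq eL L
  set m := Module.finrank ℝ ↥L' with hm
  have hmn : m ≤ n := le_trans (le_of_eq hrank) hL
  let B := stdOrthonormalBasis ℝ ↥L'
  let bvec : Fin m → ((∀ i, Fin (k i)) → ℝ) := fun j => eL.symm ((B j : EuclideanSpace ℝ (∀ i, Fin (k i))))
  -- orthonormality in coordinates
  have hBon : ∀ j l, ∑ v, bvec j v * bvec l v = if j = l then (1:ℝ) else 0 := by
    intro j l
    have h := B.orthonormal
    rw [orthonormal_iff_ite] at h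
    have h2 := h j l
    rw [Submodule.coe_inner] at h2
    simp [PiLp.inner_apply, RCLike.inner_apply, conj_trivial] at h2
    rw [← h2]
    exact Finset.sum_congr rfl fun v _ => mul_comm _ _
  -- representation of elements of L
  have hrep : ∀ y ∈ L, ∃ cf : Fin m → ℝ, ∀ v, y v = ∑ j, cf j * bvec j v := by
    intro y hy
    have hyL' : eL y ∈ L' := Submodule.mem_map_of_mem hy
    set y' : ↥L' := ⟨eL y, hyL'⟩ with hy'
    refine ⟨fun j => B.repr y' j, fun v => ?_⟩
    have h := B.sum_repr y'
    have h2 : (y' : EuclideanSpace ℝ (∀ i, Fin (k i))) = ∑ j, (B.repr y' j : ℝ) • ((B j : EuclideanSpace ℝ (∀ i, Fin (k i)))) := by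
      conv_lhs => rw [← h]
      push_cast
      simp
    have h4 : y = ∑ j, (B.repr y' j : ℝ) • bvec j := by
      have h5 := congrArg eL.symm h2
      rw [show eL.symm (y' : EuclideanSpace ℝ (∀ i, Fin (k i))) = y from eL.symm_apply_apply y] at h5
      rw [h5, map_sum]
      exact Finset.sum_congr rfl fun j _ => by rw [map_smul]
    rw [h4, Finset.sum_apply]
    exact Finset.sum_congr rfl fun j _ => by rw [Pi.smul_apply, smul_eq_mul]
  -- the signed shifted copies
  let Sg := ∀ i, Fin (k i) → Bool
  let z : (∀ i, Fin (k i)) → Sg → (∀ i, Fin (k i)) → ℝ := fun c ε v =>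
    (∏ i, sgn (ε i (v i))) * boxIndicator k s (fun i => c i + v i)
  have hzmem : ∀ c ε, z c ε ∈ signedCopies k (boxIndicator k s) := by
    intro c ε
    exact ⟨fun i => Equiv.addLeft (c i), fun i j => sgn (ε i j),
      fun i j => sgn_pm _, rfl⟩
  -- norm of each copy
  have hznorm : ∀ c ε, ∑ v, (z c ε v)^2 = S := by
    intro c ε
    have h1 : ∀ v, (z c ε v)^2 = boxIndicator k s (fun i => c i + v i) := by
      intro v
      have hsq : (∏ i, sgn (ε i (v i))) * (∏ i, sgn (ε i (v i))) = 1 := by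
        rw [← Finset.prod_mul_distrib]
        exact Finset.prod_eq_one fun i _ => sgn_mul_self _
      calc (z c ε v)^2
          = ((∏ i, sgn (ε i (v i))) * (∏ i, sgn (ε i (v i)))) *
            (boxIndicator k s (fun i => c i + v i) *
             boxIndicator k s (fun i => c i + v i)) := by rw [sq]; ring
        _ = boxIndicator k s (fun i => c i + v i) := by
            rw [hsq, boxIndicator_mul_self, one_mul]
    rw [Finset.sum_congr rfl fun v _ => h1 v]
    exact sum_box k s hsk c
  -- inner products with the basis
  let aco : (∀ i, Fin (k i)) → Sg → Fin m → ℝ := fun c ε j => ∑ v, z c ε v * bvec j v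
  set NE : ℝ := ∏ i, (2:ℝ)^(k i) with hNE
  have hNEpos : 0 < NE := Finset.prod_pos fun i _ => by positivity
  -- step 1: sum over signs
  have step1 : ∀ (c : (∀ i, Fin (k i))) (j : Fin m),
      ∑ ε : Sg, (aco c ε j)^2
        = NE * ∑ v, boxIndicator k s (fun i => c i + v i) * (bvec j v)^2 := by
    intro c j
    have expand : ∀ ε : Sg, (aco c ε j)^2
        = ∑ v, ∑ w, ((∏ i, sgn (ε i (v i))) * (∏ i, sgn (ε i (w i)))) *
            (boxIndicator k s (fun i => c i + v i) * bvec j v *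
             (boxIndicator k s (fun i => c i + w i) * bvec j w)) := by
      intro ε
      rw [sq, Finset.sum_mul_sum]
      refine Finset.sum_congr rfl fun v _ => Finset.sum_congr rfl fun w _ => ?_
      simp only [z]
      ring
    rw [Finset.sum_congr rfl fun ε _ => expand ε]
    rw [Finset.sum_comm]
    rw [Finset.sum_congr rfl fun v (_ : v ∈ Finset.univ) => Finset.sum_comm]
    have inner_eq : ∀ v w : (∀ i, Fin (k i)),
        ∑ ε : Sg, ((∏ i, sgn (ε i (v i))) * (∏ i, sgn (ε i (w i)))) *
            (boxIndicator k s (fun i => c i + v i) * bvec j v *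
             (boxIndicator k s (fun i => c i + w i) * bvec j w))
          = (if v = w then NE else 0) *
            (boxIndicator k s (fun i => c i + v i) * bvec j v *
             (boxIndicator k s (fun i => c i + w i) * bvec j w)) := by
      intro v w
      rw [← Finset.sum_mul, sum_sgn_pi]
    rw [Finset.sum_congr rfl fun v (_ : v ∈ Finset.univ) =>
      Finset.sum_congr rfl fun w (_ : w ∈ Finset.univ) => inner_eq v w]
    rw [Finset.mul_sum]
    refine Finset.sum_congr rfl fun v _ => ?_
    rw [Finset.sum_eq_single v]
    · rw [if_pos rfl]
      have : boxIndicator k s (fun i => c i + v i) * bvec j v *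
          (boxIndicator k s (fun i => c i + v i) * bvec j v)
          = boxIndicator k s (fun i => c i + v i) * (bvec j v)^2 := by
        rw [sq]
        have := boxIndicator_mul_self k s (fun i => c i + v i)
        nlinarith [this]
      rw [this]
    · intro w _ hw
      rw [if_neg (Ne.symm hw), zero_mul]
    · intro h; exact absurd (Finset.mem_univ v) h
  -- step 2: total sum
  have hb2 : ∀ j : Fin m, ∑ v, (bvec j v)^2 = 1 := by
    intro j
    have := hBon j j
    rw [if_pos rfl] at this
    rw [← this]
    exact Finset.sum_congr rfl fun v _ => by rw [pow_two]
  have step2 : ∀ j : Fin m, ∑ c : (∀ i, Fin (k i)), ∑ ε : Sg, (aco c ε j)^2 = NE * S := by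
    intro j
    rw [Finset.sum_congr rfl fun c _ => step1 c j]
    rw [← Finset.mul_sum]
    congr 1
    rw [Finset.sum_comm]
    have : ∀ v : (∀ i, Fin (k i)), ∑ c : (∀ i, Fin (k i)), boxIndicator k s (fun i => c i + v i) * (bvec j v)^2
        = S * (bvec j v)^2 := by
      intro v
      rw [← Finset.sum_mul]
      congr 1
      have hcomm : ∀ c : (∀ i, Fin (k i)), boxIndicator k s (fun i => c i + v i)
          = boxIndicator k s (fun i => v i + c i) :=
        fun c => congrArg (boxIndicator k s) (funext fun i => add_comm _ _)
      rw [Finset.sum_congr rfl fun c _ => hcomm c]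
      exact sum_box k s hsk v
    rw [Finset.sum_congr rfl fun v _ => this v]
    rw [← Finset.mul_sum, hb2 j, mul_one]
  -- pigeonhole
  have cardι : (Fintype.card (∀ i, Fin (k i)) : ℝ) = K := by
    rw [hK, Fintype.card_pi]
    push_cast
    exact Finset.prod_congr rfl fun i _ => by rw [Fintype.card_fin]
  have cardSg : (Fintype.card Sg : ℝ) = NE := by
    rw [hNE, Fintype.card_pi]
    push_cast
    refine Finset.prod_congr rfl fun i _ => ?_
    rw [Fintype.card_fun, Fintype.card_bool, Fintype.card_fin]
    push_cast
    ring
  have total : ∑ p : (∀ i, Fin (k i)) × Sg, ∑ j, (aco p.1 p.2 j)^2 = NE * S * m := by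
    rw [Fintype.sum_prod_type]
    have : ∀ c : (∀ i, Fin (k i)), ∑ ε : Sg, ∑ j, (aco c ε j)^2 = ∑ j, ∑ ε : Sg, (aco c ε j)^2 :=
      fun c => Finset.sum_comm
    rw [Finset.sum_congr rfl fun c _ => this c, Finset.sum_comm]
    rw [Finset.sum_congr rfl fun j _ => step2 j]
    rw [Finset.sum_const, Finset.card_univ, Fintype.card_fin]
    push_cast
    ring
  have pigeon : ∃ p : (∀ i, Fin (k i)) × Sg, ∑ j, (aco p.1 p.2 j)^2 ≤ S * m / K := by
    have hne : (Finset.univ : Finset ((∀ i, Fin (k i)) × Sg)).Nonempty := Finset.univ_nonempty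
    have hconst : ∑ _p : (∀ i, Fin (k i)) × Sg, S * m / K = NE * S * m := by
      rw [Finset.sum_const, Finset.card_univ, Fintype.card_prod, nsmul_eq_mul,
        Nat.cast_mul, cardι, cardSg]
      field_simp
    have hsum : ∑ p : (∀ i, Fin (k i)) × Sg, ∑ j, (aco p.1 p.2 j)^2
        ≤ ∑ _p : (∀ i, Fin (k i)) × Sg, S * m / K := by
      rw [total, hconst]
    obtain ⟨p, _, hp⟩ := Finset.exists_le_of_sum_le hne hsum
    exact ⟨p, hp⟩
  obtain ⟨⟨c, ε⟩, hp⟩ := pigeon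
  refine ⟨z c ε, hzmem c ε, fun y hy => ?_⟩
  obtain ⟨cf, hcf⟩ := hrep y hy
  -- expand the squared distance
  have hcross : ∑ v, z c ε v * y v = ∑ j, cf j * aco c ε j := by
    have h1 : ∀ v, z c ε v * y v = ∑ j, cf j * (z c ε v * bvec j v) := by
      intro v
      rw [hcf v, Finset.mul_sum]
      exact Finset.sum_congr rfl fun j _ => by ring
    rw [Finset.sum_congr rfl fun v _ => h1 v, Finset.sum_comm]
    refine Finset.sum_congr rfl fun j _ => ?_
    rw [← Finset.mul_sum]
  have hy2 : ∑ v, (y v)^2 = ∑ j, (cf j)^2 := by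
    have h1 : ∀ v, (y v)^2 = ∑ j, ∑ l, cf j * cf l * (bvec j v * bvec l v) := by
      intro v
      rw [hcf v, sq, Finset.sum_mul_sum]
      exact Finset.sum_congr rfl fun j _ => Finset.sum_congr rfl fun l _ => by ring
    rw [Finset.sum_congr rfl fun v _ => h1 v]
    rw [Finset.sum_comm]
    rw [Finset.sum_congr rfl fun j (_ : j ∈ Finset.univ) => Finset.sum_comm]
    have h2 : ∀ j l, ∑ v, cf j * cf l * (bvec j v * bvec l v)
        = cf j * cf l * (if j = l then (1:ℝ) else 0) := by
      intro j l
      rw [← Finset.mul_sum, hBon j l]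
    rw [Finset.sum_congr rfl fun j (_ : j ∈ Finset.univ) =>
      Finset.sum_congr rfl fun l (_ : l ∈ Finset.univ) => h2 j l]
    refine Finset.sum_congr rfl fun j _ => ?_
    rw [Finset.sum_eq_single j]
    · rw [if_pos rfl, mul_one, sq]
    · intro l _ hl; rw [if_neg (Ne.symm hl), mul_zero]
    · intro h; exact absurd (Finset.mem_univ j) h
  have hdist : ∑ v, (z c ε v - y v)^2
      = S - 2 * ∑ j, cf j * aco c ε j + ∑ j, (cf j)^2 := by
    have h1 : ∀ v, (z c ε v - y v)^2
        = (z c ε v)^2 - 2 * (z c ε v * y v) + (y v)^2 := fun v => by ring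
    rw [Finset.sum_congr rfl fun v _ => h1 v]
    rw [Finset.sum_add_distrib, Finset.sum_sub_distrib, ← Finset.mul_sum]
    rw [hznorm c ε, hcross, hy2]
  rw [hdist]
  have hsq : (0:ℝ) ≤ ∑ j, (cf j - aco c ε j)^2 :=
    Finset.sum_nonneg fun j _ => sq_nonneg _
  have hexp : ∑ j, (cf j - aco c ε j)^2
      = ∑ j, (cf j)^2 - 2 * ∑ j, cf j * aco c ε j + ∑ j, (aco c ε j)^2 := by
    have h1 : ∀ j, (cf j - aco c ε j)^2
        = (cf j)^2 - 2 * (cf j * aco c ε j) + (aco c ε j)^2 := fun j => by ring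
    rw [Finset.sum_congr rfl fun j _ => h1 j]
    rw [Finset.sum_add_distrib, Finset.sum_sub_distrib, ← Finset.mul_sum]
  have hA : ∑ j, (aco c ε j)^2 ≤ S * n / K := by
    refine le_trans hp ?_
    have hmn' : (m:ℝ) ≤ (n:ℝ) := by exact_mod_cast hmn
    gcongr
  have hgoal : S * (1 - (n:ℝ)/K) = S - S * n / K := by ring
  rw [hgoal]
  nlinarith [hsq, hexp, hA]

theorem stmt_9 {d : ℕ} (k s : Fin d → ℕ) (hs1 : ∀ j, 1 ≤ s j) (hsk : ∀ j, s j ≤ k j)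
    (n : ℕ) (hn : n ≤ ∏ j, k j) :
    ENNReal.ofReal ((∏ j, (s j : ℝ)) ^ ((1 : ℝ) / 2) *
        Real.sqrt (1 - (n : ℝ) / ∏ j, (k j : ℝ))) ≤
      kolWidth n (convexHull ℝ (signedCopies k (boxIndicator k s)))
        (fun x => Real.sqrt (∑ v, x v ^ 2)) := by
  rw [kolWidth]
  refine le_iInf fun L => ?_
  obtain ⟨x₀, hmem, hbd⟩ := exists_witness k s hs1 hsk n hn L.1 L.2
  have hx₀M : x₀ ∈ convexHull ℝ (signedCopies k (boxIndicator k s)) :=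
    subset_convexHull ℝ _ hmem
  refine le_trans ?_ (le_iSup₂ (f := fun x (_ : x ∈ convexHull ℝ
    (signedCopies k (boxIndicator k s))) => ⨅ y ∈ (L.1 : Set _),
      ENNReal.ofReal (Real.sqrt (∑ v, (x - y) v ^ 2))) x₀ hx₀M)
  refine le_iInf₂ fun y hy => ?_
  apply ENNReal.ofReal_le_ofReal
  have hsub : ∀ v, (x₀ - y) v = x₀ v - y v := fun v => rfl
  have h1 := hbd y hy
  set S : ℝ := ∏ j, (s j : ℝ) with hS
  set K : ℝ := ∏ j, (k j : ℝ) with hK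
  have hSnn : 0 ≤ S := Finset.prod_nonneg fun j _ => Nat.cast_nonneg _
  have hnK : (n:ℝ) ≤ K := by
    rw [hK]
    push_cast
    exact_mod_cast hn
  have hKpos : 0 < K := Finset.prod_pos fun j _ => by
    have h1 := hs1 j; have h2 := hsk j; exact_mod_cast (by omega : 0 < k j)
  have h2 : (0:ℝ) ≤ 1 - (n:ℝ)/K := by
    rw [sub_nonneg, div_le_one hKpos]; exact hnK
  calc S ^ ((1:ℝ)/2) * Real.sqrt (1 - (n:ℝ)/K)
      = Real.sqrt S * Real.sqrt (1 - (n:ℝ)/K) := by rw [Real.sqrt_eq_rpow S]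
    _ = Real.sqrt (S * (1 - (n:ℝ)/K)) := (Real.sqrt_mul hSnn _).symm
    _ ≤ Real.sqrt (∑ v, (x₀ v - y v)^2) := Real.sqrt_le_sqrt h1
    _ = Real.sqrt (∑ v, (x₀ - y) v ^ 2) := rfl
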